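/- Let K be a real-valued field with ring of integers K°, and let L ⊆ M be free K°-modules of finite ranks l and m respectively (L a submodule of M). Then there exist a basis e₁, …, e_m of M and elements π₁, …, π_l ∈ K° such that π₁e₁, …, π_l e_l is a basis of L. -/

import Mathlib

open Submodule Set

theorem exists_dvd_min {R : Type*} [CommRing R] [IsDomain R] [ValuationRing R]
    {α : Type*} (s : Finset α) (hs : s.Nonempty) (f : α → R) :
    ∃ a ∈ s, ∀ b ∈ s, f a ∣ f b := by
  induction hs using Finset.Nonempty.cons_induction with
  | singleton a => exact ⟨a, Finset.mem_singleton_self a, fun b hb => by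
      rw [Finset.mem_singleton] at hb; rw [hb]⟩
  | cons a s ha hs ih =>
    obtain ⟨b, hb, hbmin⟩ := ih
    rcases ValuationRing.dvd_total (f a) (f b) with h | h
    · exact ⟨a, Finset.mem_cons_self a s, fun c hc => by
        rcases Finset.mem_cons.mp hc with rfl | hc
        · rfl
        · exact h.trans (hbmin c hc)⟩
    · exact ⟨b, Finset.mem_cons_of_mem hb, fun c hc => by
        rcases Finset.mem_cons.mp hc with rfl | hc
        · exact h
        · exact hbmin c hc⟩

theorem snf_aux {R : Type*} [CommRing R] [IsDomain R] [ValuationRing R]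
    {O : Type*} [AddCommGroup O] [Module R O] (m : ℕ) :
    ∀ (Ms N : Submodule R O), N ≤ Ms → N.FG → ∀ (_bMs : Module.Basis (Fin m) R Ms),
    ∃ (l : ℕ) (hlm : l ≤ m) (e : Module.Basis (Fin m) R Ms) (π : Fin l → R)
      (f : Module.Basis (Fin l) R N), ∀ i, ((f i : O)) = π i • ((e (Fin.castLE hlm i)) : O) := by
  induction m with
  | zero =>
    intro Ms N hNM _hfg bMs
    have hN : N = ⊥ := by
      rw [eq_bot_iff]
      intro x hx
      have hsub : Subsingleton ↥Ms := by
        haveI : IsEmpty (Fin 0) := inferInstance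
        exact ⟨fun a b => bMs.repr.injective (Subsingleton.elim _ _)⟩
      have : (⟨x, hNM hx⟩ : ↥Ms) = 0 := Subsingleton.elim _ _
      simpa using congrArg (Subtype.val) this
    subst hN
    exact ⟨0, le_rfl, bMs, finZeroElim, Module.Basis.empty _, fun i => i.elim0⟩
  | succ m' IH =>
    intro Ms N hNM hfg bMs
    by_cases hN : N = ⊥
    · subst hN
      exact ⟨0, Nat.zero_le _, bMs, finZeroElim, Module.Basis.empty _, fun i => i.elim0⟩
    obtain ⟨k, w, hw⟩ := Submodule.fg_iff_exists_fin_generating_family.mp hfg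
    have wN : ∀ j, w j ∈ N := fun j => hw ▸ subset_span (mem_range_self j)
    set A : Fin (m' + 1) → Fin k → R := fun i j => bMs.repr ⟨w j, hNM (wN j)⟩ i with hA
    have hex : ∃ i j, A i j ≠ 0 := by
      by_contra h
      push_neg at h
      apply hN
      rw [← hw, span_eq_bot]
      rintro _ ⟨j, rfl⟩
      have : (⟨w j, hNM (wN j)⟩ : ↥Ms) = 0 := by
        apply bMs.repr.injective
        ext i
        simpa using h i j
      simpa using congrArg Subtype.val this
    obtain ⟨i₀, j₀, h₀⟩ := hex
    obtain ⟨⟨p, q⟩, -, hmin⟩ := exists_dvd_min (Finset.univ : Finset (Fin (m' + 1) × Fin k))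
      ⟨(i₀, j₀), Finset.mem_univ _⟩ (fun ij => A ij.1 ij.2)
    set a := A p q with ha_def
    have hdvdA : ∀ i j, a ∣ A i j := fun i j => hmin (i, j) (Finset.mem_univ _)
    have ha : a ≠ 0 := fun h => h₀ (zero_dvd_iff.mp (h ▸ hdvdA i₀ j₀))
    -- `a` divides `ψ x` for every functional `ψ` and every `x ∈ N`
    have hdvdpsi : ∀ (ψ : ↥Ms →ₗ[R] R) (x : O) (hx : x ∈ N), a ∣ ψ ⟨x, hNM hx⟩ := by
      intro ψ
      let T : Submodule R ↥Ms :=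
        { carrier := {x | a ∣ ψ x}
          add_mem' := fun hx hy => by simpa [map_add] using dvd_add hx hy
          zero_mem' := by simp
          smul_mem' := fun c x hx => by simpa [map_smul] using (Dvd.dvd.mul_left hx c) }
      have hsub : N ≤ T.map Ms.subtype := by
        rw [← hw, span_le]
        rintro _ ⟨j, rfl⟩
        refine ⟨⟨w j, hNM (wN j)⟩, ?_, rfl⟩
        show a ∣ ψ ⟨w j, hNM (wN j)⟩
        conv_rhs => rw [← bMs.sum_repr ⟨w j, hNM (wN j)⟩]
        rw [map_sum]
        refine Finset.dvd_sum fun i _ => ?_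
        rw [map_smul, smul_eq_mul]
        exact (hdvdA i j).mul_right _
      intro x hx
      obtain ⟨x', hx', hxx⟩ := hsub hx
      have hxe : x' = ⟨x, hNM hx⟩ := Subtype.ext hxx
      rwa [← hxe]
    set φ : ↥Ms →ₗ[R] R := bMs.coord p with hφ
    have φy : φ ⟨w q, hNM (wN q)⟩ = a := rfl
    choose c hc using fun i => hdvdA i q
    set y' : ↥Ms := ∑ i, c i • bMs i with hy'
    have hay' : a • y' = ⟨w q, hNM (wN q)⟩ := by
      rw [hy', Finset.smul_sum]
      conv_rhs => rw [← bMs.sum_repr ⟨w q, hNM (wN q)⟩]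
      refine Finset.sum_congr rfl fun i _ => ?_
      rw [smul_smul, ← hc i]
    have φy' : φ y' = 1 := by
      apply mul_left_cancel₀ ha
      have : φ (a • y') = a := by rw [hay']; exact φy
      rw [map_smul, smul_eq_mul] at this
      rw [this, mul_one]
    -- the complementary submodule M'
    set v : Fin m' → O := fun i => (bMs (p.succAbove i) : O) with hv
    have hv_li : LinearIndependent R v := by
      have h1 : LinearIndependent R (fun i : Fin m' => bMs (p.succAbove i)) :=
        bMs.linearIndependent.comp _ (Fin.succAbove_right_injective)
      exact h1.map' Ms.subtype (Submodule.ker_subtype Ms)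
    set M' : Submodule R O := span R (Set.range v) with hM'
    have M'_le : M' ≤ Ms := span_le.mpr (by rintro _ ⟨i, rfl⟩; exact (bMs _).2)
    set bM' : Module.Basis (Fin m') R ↥M' := Module.Basis.span hv_li with hbM'
    -- membership in M' iff the p-th coordinate vanishes
    have mem_M' : ∀ z : ↥Ms, φ z = 0 → (z : O) ∈ M' := by
      intro z hz
      have hzz : (z : O) = ∑ i : Fin m', bMs.repr z (p.succAbove i) • v i := by
        conv_lhs => rw [← bMs.sum_repr z]
        push_cast
        rw [Fin.sum_univ_succAbove (fun i => (bMs.repr z i : R) • (bMs i : O)) p]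
        rw [show (bMs.repr z p : R) = 0 from hz, zero_smul, zero_add]
      rw [hzz]
      exact sum_mem fun i _ => smul_mem _ _ (subset_span (mem_range_self i))
    have φM' : ∀ (x : O), x ∈ M' → ∀ (hx : x ∈ Ms), φ ⟨x, hx⟩ = 0 := by
      have hsub : M' ≤ (LinearMap.ker φ).map Ms.subtype := by
        rw [hM', span_le]
        rintro _ ⟨i, rfl⟩
        refine ⟨bMs (p.succAbove i), ?_, rfl⟩
        show bMs (p.succAbove i) ∈ LinearMap.ker φ
        rw [LinearMap.mem_ker, hφ, Module.Basis.coord_apply, Module.Basis.repr_self,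
          Finsupp.single_apply_eq_zero]
        exact fun h => absurd h.symm (Fin.succAbove_ne p i)
      intro x hx hxMs
      obtain ⟨x', hx', hxx⟩ := hsub hx
      have hxe : x' = ⟨x, hxMs⟩ := Subtype.ext hxx
      rwa [← hxe]
    -- the submodule N'
    set ψN : ↥N →ₗ[R] R := φ.comp (Submodule.inclusion hNM) with hψN
    set N' : Submodule R O := (LinearMap.ker ψN).map N.subtype with hN'
    have N'_le_N : N' ≤ N := N.map_subtype_le _
    have ψN_apply : ∀ (x : O) (hx : x ∈ N), ψN ⟨x, hx⟩ = φ ⟨x, hNM hx⟩ := fun x hx => rfl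
    have mem_N' : ∀ (x : O) (hx : x ∈ N), φ ⟨x, hNM hx⟩ = 0 → x ∈ N' := by
      intro x hx h
      refine ⟨⟨x, hx⟩, show _ ∈ LinearMap.ker ψN from ?_, rfl⟩
      rwa [LinearMap.mem_ker, ψN_apply]
    have N'_mem : ∀ x ∈ N', x ∈ N ∧ ∀ (hx : x ∈ Ms), φ ⟨x, hx⟩ = 0 := by
      rintro x ⟨⟨x, hxN⟩, hker, rfl⟩
      refine ⟨hxN, fun hx => ?_⟩
      rw [SetLike.mem_coe, LinearMap.mem_ker, ψN_apply] at hker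
      exact hker
    have N'_le_M' : N' ≤ M' := by
      intro x hx
      obtain ⟨hxN, hφ0⟩ := N'_mem x hx
      exact mem_M' ⟨x, hNM hxN⟩ (hφ0 _)
    -- N' is finitely generated
    choose c' hc' using fun j => hdvdpsi φ (w j) (wN j)
    have hN'fg : N'.FG := by
      rw [Submodule.fg_iff_exists_fin_generating_family]
      refine ⟨k, fun j => w j - c' j • w q, le_antisymm ?_ ?_⟩
      · rw [span_le]
        rintro _ ⟨j, rfl⟩
        refine mem_N' _ (N.sub_mem (wN j) (N.smul_mem _ (wN q))) ?_
        have : (⟨w j - c' j • w q, hNM (N.sub_mem (wN j) (N.smul_mem _ (wN q)))⟩ : ↥Ms)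
            = ⟨w j, hNM (wN j)⟩ - c' j • ⟨w q, hNM (wN q)⟩ := rfl
        rw [this, map_sub, map_smul, hc' j, φy, smul_eq_mul, mul_comm, sub_self]
      · intro x hx
        obtain ⟨hxN, hφ0⟩ := N'_mem x hx
        rw [← hw] at hxN
        obtain ⟨r, hr⟩ := (mem_span_range_iff_exists_fun R).mp hxN
        have hsum : ∑ j, (r j * c' j) = 0 := by
          apply mul_left_cancel₀ ha
          rw [mul_zero, Finset.mul_sum]
          have h1 : φ ⟨x, hNM (hw ▸ hxN)⟩ = 0 := hφ0 _
          have h2 : (⟨x, hNM (hw ▸ hxN)⟩ : ↥Ms) = ∑ j, r j • ⟨w j, hNM (wN j)⟩ := by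
            apply Subtype.ext
            push_cast
            exact hr.symm
          rw [h2, map_sum] at h1
          rw [← h1]
          refine Finset.sum_congr rfl fun j _ => ?_
          rw [map_smul, smul_eq_mul, hc' j]
          ring
        have hxeq : x = ∑ j, r j • (w j - c' j • w q) := by
          rw [← hr]
          rw [Finset.sum_congr rfl (fun j _ => smul_sub (r j) (w j) (c' j • w q))]
          rw [Finset.sum_sub_distrib]
          have : ∑ j, r j • c' j • w q = (∑ j, r j * c' j) • w q := by
            rw [Finset.sum_smul]
            exact Finset.sum_congr rfl fun j _ => (mul_smul _ _ _).symm
          rw [this, hsum, zero_smul, sub_zero]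
        rw [hxeq]
        exact sum_mem fun j _ => smul_mem _ _ (subset_span (mem_range_self j))
    -- orthogonality
    have y'_ortho : ∀ (ch : R), ∀ z ∈ M', ch • ((y' : O)) + z = 0 → ch = 0 := by
      intro ch z hz h
      have hzMs : z ∈ Ms := M'_le hz
      have hMs : ch • y' + ⟨z, hzMs⟩ = 0 := Subtype.ext (by push_cast; exact h)
      have := congrArg φ hMs
      rw [map_add, map_smul, φy', smul_eq_mul, mul_one, φM' z hz hzMs, add_zero,
        map_zero] at this
      exact this
    have y_ortho_N' : ∀ (ch : R), ∀ z ∈ N', ch • (w q) + z = 0 → ch = 0 := by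
      intro ch z hz h
      have hwq : (w q : O) = a • (y' : O) := by
        have := congrArg (Subtype.val) hay'
        push_cast at this
        exact this.symm
      rw [hwq, smul_smul] at h
      have := y'_ortho (ch * a) z (N'_le_M' hz) h
      exact (mul_eq_zero.mp this).resolve_right ha
    -- spanning
    have hspM : ∀ z ∈ Ms, ∃ ch : R, z + ch • ((y' : O)) ∈ M' := by
      intro z hz
      refine ⟨-φ ⟨z, hz⟩, ?_⟩
      have : (⟨z, hz⟩ + (-φ ⟨z, hz⟩) • y' : ↥Ms) = ⟨z + (-φ ⟨z, hz⟩) • (y' : O),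
          Ms.add_mem hz (Ms.smul_mem _ y'.2)⟩ := rfl
      have hmem := mem_M' (⟨z, hz⟩ + (-φ ⟨z, hz⟩) • y')
        (by rw [map_add, map_smul, φy', smul_eq_mul, mul_one, add_neg_cancel])
      rw [this] at hmem
      exact hmem
    have hspN : ∀ z ∈ N, ∃ ch : R, z + ch • (w q) ∈ N' := by
      intro z hz
      obtain ⟨b, hb⟩ := hdvdpsi φ z hz
      refine ⟨-b, ?_⟩
      refine mem_N' _ (N.add_mem hz (N.smul_mem _ (wN q))) ?_
      have : (⟨z + (-b) • w q, hNM (N.add_mem hz (N.smul_mem _ (wN q)))⟩ : ↥Ms)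
          = ⟨z, hNM hz⟩ + (-b) • ⟨w q, hNM (wN q)⟩ := rfl
      rw [this, map_add, map_smul, hb, φy, smul_eq_mul]
      ring
    -- apply the induction hypothesis
    obtain ⟨l', hl'm', e', π', f', hf'⟩ := IH M' N' N'_le_M' hN'fg bM'
    set e : Module.Basis (Fin (m' + 1)) R ↥Ms :=
      Module.Basis.mkFinConsOfLE (y' : O) y'.2 e' M'_le y'_ortho hspM with he
    set f : Module.Basis (Fin (l' + 1)) R ↥N :=
      Module.Basis.mkFinConsOfLE (w q) (wN q) f' N'_le_N y_ortho_N' hspN with hfdef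
    refine ⟨l' + 1, Nat.succ_le_succ hl'm', e, Fin.cons a π', f, ?_⟩
    intro i
    rw [he, hfdef]
    rw [Module.Basis.coe_mkFinConsOfLE, Module.Basis.coe_mkFinConsOfLE]
    refine Fin.cases ?_ (fun i => ?_) i
    · simp only [Fin.cons_zero, Fin.castLE_zero]
      have := congrArg (Subtype.val) hay'
      push_cast at this
      exact this.symm
    · rw [Fin.castLE_succ]
      simp only [Fin.cons_succ, Function.comp_apply, Submodule.coe_inclusion]
      exact hf' i

open scoped NNReal

/-- Elementary divisors for a pair of free modules over the ring of integers `K°` of a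
real-valued field `K`: if `L ⊆ M` are free `K°`-modules of ranks `l` and `m`, then there is a
basis `e₁, …, e_m` of `M` and elements `π₁, …, π_l ∈ K°` such that `π₁e₁, …, π_l e_l` is a basis
of `L`. -/
theorem exists_adapted_basis_of_free_submodule
    {K : Type*} [Field K] (vK : Valuation K ℝ≥0)
    {M : Type*} [AddCommGroup M] [Module ↥vK.integer M]
    {l m : ℕ} (bM : Module.Basis (Fin m) ↥vK.integer M)
    (L : Submodule ↥vK.integer M) (bL : Module.Basis (Fin l) ↥vK.integer ↥L) :
    ∃ (hlm : l ≤ m) (e : Module.Basis (Fin m) ↥vK.integer M) (π : Fin l → ↥vK.integer)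
      (f : Module.Basis (Fin l) ↥vK.integer ↥L),
      ∀ i : Fin l, ((f i : M)) = π i • e (Fin.castLE hlm i) := by
  have hLfg : L.FG := by
    rw [Submodule.fg_iff_exists_fin_generating_family]
    refine ⟨l, fun i => ((bL i : M)), ?_⟩
    rw [show (fun i => ((bL i : M))) = L.subtype ∘ bL from rfl, Set.range_comp,
      Submodule.span_image, bL.span_eq, Submodule.map_subtype_top]
  let bTop : Module.Basis (Fin m) ↥vK.integer ↥(⊤ : Submodule ↥vK.integer M) :=
    bM.map (LinearEquiv.ofTop ⊤ rfl).symm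
  obtain ⟨l₀, hlm, eT, π, f, hsnf⟩ := snf_aux m ⊤ L le_top hLfg bTop
  have hl : l₀ = l := by
    simpa using Fintype.card_eq.mpr ⟨f.indexEquiv bL⟩
  subst hl
  refine ⟨hlm, eT.map (LinearEquiv.ofTop ⊤ rfl), π, f, fun i => ?_⟩
  rw [hsnf i]
  simp [Module.Basis.map_apply]
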